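/- arXiv:0902.2315 — 4 statements merged into one kernel-verified Lean document; each statement's English description precedes it below -/
import Mathlib

section
/- Let 0 < α < β and ε > 0. There exists B > 0 such that for all t₁ > B and all t₂ ≥ (β/α + ε) t₁, setting u = t₂ - t₁, one has e^{α u} e^{(α - β) t₁} - α u - 1 > 0. -/
theorem lemma61_case2_b (α β ε : ℝ) (hα : 0 < α) (hαβ : α < β) (hε : 0 < ε) :
    ∃ B > (0 : ℝ), ∀ t₁ > B, ∀ t₂ ≥ (β / α + ε) * t₁,
      Real.exp (α * (t₂ - t₁)) * Real.exp ((α - β) * t₁) - α * (t₂ - t₁) - 1 > 0 := by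
  refine ⟨max 1 (4 * (β - α) / ((ε * α) ^ 2)), lt_of_lt_of_le one_pos (le_max_left _ _), ?_⟩
  intro t₁ ht₁ t₂ ht₂
  have ht₁1 : 1 < t₁ := lt_of_le_of_lt (le_max_left _ _) ht₁
  have ht₁0 : 0 < t₁ := lt_trans one_pos ht₁1
  have hεα : 0 < (ε * α) ^ 2 := by positivity
  have hBt : 4 * (β - α) / ((ε * α) ^ 2) < t₁ := lt_of_le_of_lt (le_max_right _ _) ht₁
  have hkey : 4 * (β - α) < (ε * α) ^ 2 * t₁ := by
    rw [div_lt_iff₀ hεα] at hBt; linarith [hBt]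
  set y := α * t₂ - β * t₁ with hy_def
  have hy : ε * α * t₁ ≤ y := by
    have h1 : α * ((β / α + ε) * t₁) ≤ α * t₂ :=
      mul_le_mul_of_nonneg_left ht₂ (le_of_lt hα)
    have h2 : α * ((β / α + ε) * t₁) = β * t₁ + ε * α * t₁ := by
      field_simp
    simp only [hy_def]; linarith [h1, h2 ▸ h1]
  have hy0 : 0 < y := lt_of_lt_of_le (by positivity) hy
  have hexp : Real.exp (α * (t₂ - t₁)) * Real.exp ((α - β) * t₁) = Real.exp y := by
    rw [← Real.exp_add]; congr 1; simp only [hy_def]; ring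
  rw [hexp]
  have h3 : α * (t₂ - t₁) = y + (β - α) * t₁ := by simp only [hy_def]; ring
  rw [h3]
  have h4 : y / 2 + 1 ≤ Real.exp (y / 2) := Real.add_one_le_exp _
  have h5 : Real.exp y = Real.exp (y / 2) * Real.exp (y / 2) := by
    rw [← Real.exp_add]; ring_nf
  have hy2 : (ε * α * t₁) ^ 2 ≤ y ^ 2 :=
    pow_le_pow_left₀ (by positivity) hy 2
  have hsq : 4 * (β - α) * t₁ < y ^ 2 := by nlinarith [hkey, hy2, ht₁0]
  nlinarith [h4, h5, hsq, hy0, Real.exp_pos (y / 2)]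
end

section
/- Let N ≥ 2 be an integer, 0 < a ≤ b, and let A : ℝ≥0 → ℝ>0 be a function satisfying e^{-(N-1) b s} ≤ A(t+s)/A(t) ≤ e^{-(N-1) a s} for all t, s ≥ 0. Define δ = limsup_{R→∞} (1/R) ln(1/A(R/2)) and δ⁻ = liminf_{R→∞} (1/R) ln(1/A(R/2)). Then (N-1)a/2 ≤ δ⁻ ≤ δ ≤ (N-1)b/2, and in particular δ/δ⁻ ≤ b/a. -/
open Filter

theorem parabolic_exponent_pinching (N : ℕ) (hN : 2 ≤ N) (a b : ℝ)
    (ha : 0 < a) (hab : a ≤ b) (A : ℝ → ℝ) (hApos : ∀ t, 0 ≤ t → 0 < A t)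
    (hA : ∀ t ≥ (0 : ℝ), ∀ s ≥ (0 : ℝ),
      Real.exp (-(N - 1 : ℝ) * b * s) ≤ A (t + s) / A t ∧
        A (t + s) / A t ≤ Real.exp (-(N - 1 : ℝ) * a * s))
    (δ δminus : ℝ)
    (hδ : Filter.limsup (fun R : ℝ => Real.log (1 / A (R / 2)) / R) atTop = δ)
    (hδm : Filter.liminf (fun R : ℝ => Real.log (1 / A (R / 2)) / R) atTop = δminus) :
    (N - 1 : ℝ) * a / 2 ≤ δminus ∧ δminus ≤ δ ∧ δ ≤ (N - 1 : ℝ) * b / 2 ∧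
      δ / δminus ≤ b / a := by
  have hN1 : (0:ℝ) < (N - 1 : ℝ) := by
    have : (2:ℝ) ≤ (N:ℝ) := by exact_mod_cast hN
    linarith
  have hA0 : 0 < A 0 := hApos 0 le_rfl
  set c := Real.log (A 0) with hc
  set f : ℝ → ℝ := fun R => Real.log (1 / A (R / 2)) / R with hf
  set g : ℝ → ℝ := fun R => (N-1:ℝ)*a/2 - c/R with hg
  set h : ℝ → ℝ := fun R => (N-1:ℝ)*b/2 - c/R with hh
  have key : ∀ R : ℝ, 1 ≤ R → g R ≤ f R ∧ f R ≤ h R := by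
    intro R hR
    have hRpos : (0:ℝ) < R := lt_of_lt_of_le one_pos hR
    have hR2 : (0:ℝ) ≤ R/2 := by linarith
    obtain ⟨h1, h2⟩ := hA 0 le_rfl (R/2) hR2
    rw [zero_add] at h1 h2
    have hAR : 0 < A (R/2) := hApos _ hR2
    have hlog1 : -(N-1:ℝ)*b*(R/2) ≤ Real.log (A (R/2)) - c := by
      have := Real.log_le_log (Real.exp_pos _) h1
      rwa [Real.log_exp, Real.log_div (ne_of_gt hAR) (ne_of_gt hA0)] at this
    have hlog2 : Real.log (A (R/2)) - c ≤ -(N-1:ℝ)*a*(R/2) := by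
      have := Real.log_le_log (div_pos hAR hA0) h2
      rwa [Real.log_exp, Real.log_div (ne_of_gt hAR) (ne_of_gt hA0)] at this
    have hfR : f R = (- Real.log (A (R/2))) / R := by
      simp only [hf, one_div, Real.log_inv]
    constructor
    · rw [hfR]
      show ((N:ℝ)-1)*a/2 - c/R ≤ -Real.log (A (R/2)) / R
      have e : ((N-1:ℝ)*a/2 - c/R) = ((N-1:ℝ)*a*(R/2) - c)/R := by
        field_simp
      rw [e]
      gcongr
      linarith
    · rw [hfR]
      show -Real.log (A (R/2)) / R ≤ ((N:ℝ)-1)*b/2 - c/R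
      have e : ((N-1:ℝ)*b/2 - c/R) = ((N-1:ℝ)*b*(R/2) - c)/R := by
        field_simp
      rw [e]
      gcongr
      linarith
  have hgt : Tendsto g atTop (nhds ((N-1:ℝ)*a/2)) := by
    have : Tendsto (fun R : ℝ => c/R) atTop (nhds 0) :=
      Tendsto.div_atTop tendsto_const_nhds tendsto_id
    simpa using tendsto_const_nhds.sub this
  have hht : Tendsto h atTop (nhds ((N-1:ℝ)*b/2)) := by
    have : Tendsto (fun R : ℝ => c/R) atTop (nhds 0) :=
      Tendsto.div_atTop tendsto_const_nhds tendsto_id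
    simpa using tendsto_const_nhds.sub this
  have hgf : ∀ᶠ R in atTop, g R ≤ f R :=
    (eventually_ge_atTop 1).mono fun R hR => (key R hR).1
  have hfh : ∀ᶠ R in atTop, f R ≤ h R :=
    (eventually_ge_atTop 1).mono fun R hR => (key R hR).2
  have hbdd_le : IsBoundedUnder (· ≤ ·) atTop f :=
    (hht.isBoundedUnder_le).mono_le hfh
  have hbdd_ge : IsBoundedUnder (· ≥ ·) atTop f :=
    (hgt.isBoundedUnder_ge).mono_ge hgf
  have hcob_le : IsCoboundedUnder (· ≤ ·) atTop f := hbdd_ge.isCoboundedUnder_le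
  have hcob_ge : IsCoboundedUnder (· ≥ ·) atTop f := hbdd_le.isCoboundedUnder_ge
  have h1 : (N - 1 : ℝ) * a / 2 ≤ δminus := by
    rw [← hδm, ← hgt.liminf_eq]
    exact liminf_le_liminf hgf hgt.isBoundedUnder_ge hcob_ge
  have h3 : δ ≤ (N - 1 : ℝ) * b / 2 := by
    rw [← hδ, ← hht.limsup_eq]
    exact limsup_le_limsup hfh hcob_le hht.isBoundedUnder_le
  have h2 : δminus ≤ δ := by
    rw [← hδ, ← hδm]
    exact liminf_le_limsup hbdd_le hbdd_ge
  refine ⟨h1, h2, h3, ?_⟩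
  have hdm : 0 < δminus := lt_of_lt_of_le (by nlinarith) h1
  calc δ / δminus ≤ ((N - 1 : ℝ) * b / 2) / δminus := by gcongr
    _ ≤ ((N - 1 : ℝ) * b / 2) / ((N - 1 : ℝ) * a / 2) := by
        gcongr
        nlinarith
    _ = b / a := by
        have h2' : ((N:ℝ)-1) ≠ 0 := ne_of_gt hN1
        have ha' : a ≠ 0 := ne_of_gt ha
        field_simp
end

section
/- Let A : ℝ≥0 → ℝ>0 be nonincreasing, and suppose there exist 0 < a ≤ b with e^{-bs} ≤ A(t+s)/A(t) ≤ e^{-as} for all t,s ≥ 0. Define δ = limsup_{R→∞} (1/R) ln(1/A(R/2)), δ⁻ = liminf_{R→∞} (1/R) ln(1/A(R/2)), and F(R) = ∫_0^R A(t)/A((t+R)/2) dt. If δ ≤ 2δ⁻, then for every ε > 0 there exists C > 0 such that F(R) ≤ C e^{(δ + 3ε) R} for all sufficiently large R; in particular limsup_{R→∞} (1/R) ln F(R) ≤ δ. -/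
open Filter


open Filter in
private lemma real_limsup_le_of_eventually_le {u : ℝ → ℝ} {a : ℝ} (ha : 0 ≤ a)
    (h : ∀ᶠ x in atTop, u x ≤ a) : Filter.limsup u atTop ≤ a := by
  by_cases hc : Filter.IsCoboundedUnder (· ≤ ·) atTop u
  · exact Filter.limsup_le_of_le hc h
  · rw [Filter.limsup_eq, Real.sInf_of_not_bddBelow]
    · exact ha
    · rintro ⟨c, hcb⟩
      exact hc ⟨c, fun a' ha' => hcb (Filter.eventually_map.mp ha')⟩

theorem cuspidal_function_upper_bound (a b : ℝ) (ha : 0 < a) (hab : a ≤ b)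
    (A : ℝ → ℝ) (hApos : ∀ t, 0 ≤ t → 0 < A t)
    (hAanti : AntitoneOn A (Set.Ici 0))
    (hA : ∀ t ≥ (0 : ℝ), ∀ s ≥ (0 : ℝ),
      Real.exp (-b * s) ≤ A (t + s) / A t ∧ A (t + s) / A t ≤ Real.exp (-a * s))
    (δ δminus : ℝ)
    (hδ : Filter.limsup (fun R : ℝ => Real.log (1 / A (R / 2)) / R) atTop = δ)
    (hδm : Filter.liminf (fun R : ℝ => Real.log (1 / A (R / 2)) / R) atTop = δminus)
    (F : ℝ → ℝ) (hF : ∀ R, F R = ∫ t in (0 : ℝ)..R, A t / A ((t + R) / 2))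
    (hpinch : δ ≤ 2 * δminus) :
    (∀ ε > (0 : ℝ), ∃ C > (0 : ℝ), ∀ᶠ R in atTop,
        F R ≤ C * Real.exp ((δ + 3 * ε) * R)) ∧
      Filter.limsup (fun R : ℝ => Real.log (F R) / R) atTop ≤ δ := by
  have A0pos : 0 < A 0 := hApos 0 le_rfl
  set L : ℝ := Real.log (A 0) with hL
  -- bounds on the function whose limsup/liminf are δ, δminus
  have hfval : ∀ R : ℝ, 1 ≤ R →
      a / 2 - |L| ≤ Real.log (1 / A (R / 2)) / R ∧
      Real.log (1 / A (R / 2)) / R ≤ b / 2 + |L| := by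
    intro R hR
    have hRpos : (0 : ℝ) < R := by linarith
    have h2 : (0:ℝ) ≤ R / 2 := by linarith
    have hAR : 0 < A (R / 2) := hApos _ h2
    have hAh := hA 0 le_rfl (R / 2) h2
    rw [zero_add] at hAh
    obtain ⟨h1, h2'⟩ := hAh
    -- A 0 * exp(-b*(R/2)) ≤ A (R/2) ≤ A 0 * exp(-a*(R/2))
    have hlow : Real.exp (-b * (R / 2)) * A 0 ≤ A (R / 2) := (le_div_iff₀ A0pos).mp h1
    have hhigh : A (R / 2) ≤ Real.exp (-a * (R / 2)) * A 0 := by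
      have := (div_le_iff₀ A0pos).mp h2'
      linarith
    have hloglow : L + (-b * (R / 2)) ≤ Real.log (A (R / 2)) := by
      have := (Real.log_le_log_iff (by positivity) hAR).mpr hlow
      rwa [Real.log_mul (Real.exp_ne_zero _) (ne_of_gt A0pos), Real.log_exp, add_comm] at this
    have hloghigh : Real.log (A (R / 2)) ≤ L + (-a * (R / 2)) := by
      have := (Real.log_le_log_iff hAR (by positivity)).mpr hhigh
      rwa [Real.log_mul (Real.exp_ne_zero _) (ne_of_gt A0pos), Real.log_exp, add_comm] at this
    rw [one_div, Real.log_inv]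
    have habs1 : -|L| ≤ L := neg_abs_le L
    have habs2 : L ≤ |L| := le_abs_self L
    have habs0 : 0 ≤ |L| := abs_nonneg L
    constructor
    · rw [le_div_iff₀ hRpos]
      nlinarith [mul_nonneg habs0 (by linarith : (0:ℝ) ≤ R - 1)]
    · rw [div_le_iff₀ hRpos]
      nlinarith [mul_nonneg habs0 (by linarith : (0:ℝ) ≤ R - 1)]
  have hBddAbove : IsBoundedUnder (· ≤ ·) atTop
      (fun R : ℝ => Real.log (1 / A (R / 2)) / R) :=
    ⟨b / 2 + |L|, eventually_atTop.mpr ⟨1, fun R hR => (hfval R hR).2⟩⟩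
  have hBddBelow : IsBoundedUnder (· ≥ ·) atTop
      (fun R : ℝ => Real.log (1 / A (R / 2)) / R) :=
    ⟨a / 2 - |L|, eventually_atTop.mpr ⟨1, fun R hR => (hfval R hR).1⟩⟩
  have hδmδ : δminus ≤ δ := by
    rw [← hδ, ← hδm]
    exact liminf_le_limsup hBddAbove hBddBelow
  have hδ0 : 0 ≤ δ := by linarith
  -- the key quantitative bound
  have key : ∀ ε > (0 : ℝ), ∃ C : ℝ, 1 ≤ C ∧ ∀ᶠ R in atTop,
      |F R| ≤ C * Real.exp ((δ + 3 * ε) * R) := by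
    intro ε hε
    -- eventual bounds from limsup / liminf
    have hlim1 : ∀ᶠ R in atTop, δminus - ε / 2 < Real.log (1 / A (R / 2)) / R := by
      apply eventually_lt_of_lt_liminf _ hBddBelow
      rw [hδm]; linarith
    have hlim2 : ∀ᶠ R in atTop, Real.log (1 / A (R / 2)) / R < δ + ε / 2 := by
      apply eventually_lt_of_limsup_lt _ hBddAbove
      rw [hδ]; linarith
    obtain ⟨T₁, hT₁⟩ := eventually_atTop.mp hlim1
    obtain ⟨T₂, hT₂⟩ := eventually_atTop.mp hlim2
    -- upper bound on A for large arguments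
    have hAup : ∀ t : ℝ, max T₁ 1 ≤ 2 * t → A t ≤ Real.exp (-(2 * δminus - ε) * t) := by
      intro t ht
      have h1 : (1 : ℝ) ≤ 2 * t := le_trans (le_max_right _ _) ht
      have ht0 : 0 < t := by linarith
      have hf := hT₁ (2 * t) (le_trans (le_max_left _ _) ht)
      have h2t : (2 * t) / 2 = t := by ring
      rw [h2t, one_div, Real.log_inv] at hf
      have := (lt_div_iff₀ (by linarith : (0:ℝ) < 2 * t)).mp hf
      have hlog : Real.log (A t) ≤ -(2 * δminus - ε) * t := by nlinarith
      exact (Real.log_le_iff_le_exp (hApos t ht0.le)).mp hlog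
    -- lower bound on A for large arguments
    have hAlow : ∀ u : ℝ, max T₂ 1 ≤ 2 * u →
        Real.exp (-(2 * δ + ε) * u) ≤ A u := by
      intro u hu
      have h1 : (1 : ℝ) ≤ 2 * u := le_trans (le_max_right _ _) hu
      have hu0 : 0 < u := by linarith
      have hf := hT₂ (2 * u) (le_trans (le_max_left _ _) hu)
      have h2u : (2 * u) / 2 = u := by ring
      rw [h2u, one_div, Real.log_inv] at hf
      have := (div_lt_iff₀ (by linarith : (0:ℝ) < 2 * u)).mp hf
      have hlog : -(2 * δ + ε) * u ≤ Real.log (A u) := by nlinarith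
      exact (Real.le_log_iff_exp_le (hApos u hu0.le)).mp hlog
    set S : ℝ := max T₁ 1 / 2 with hS
    set c : ℝ := 2 * δminus - ε with hc
    set C₁ : ℝ := max 1 (A 0 * Real.exp (|c| * S)) with hC₁
    have hC₁1 : (1 : ℝ) ≤ C₁ := le_max_left _ _
    have hC₁0 : (0 : ℝ) ≤ C₁ := by linarith
    -- global upper bound on A
    have hup : ∀ t : ℝ, 0 ≤ t → A t ≤ C₁ * Real.exp (-c * t) := by
      intro t ht
      rcases le_or_gt (max T₁ 1) (2 * t) with h | h
      · exact le_trans (hAup t h) (le_mul_of_one_le_left (Real.exp_pos _).le hC₁1)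
      · have htS : t ≤ S := by rw [hS]; linarith
        have hA0 : A t ≤ A 0 := hAanti (Set.mem_Ici.mpr le_rfl) (Set.mem_Ici.mpr ht) ht
        have habs : 0 ≤ |c| * S + -c * t := by
          nlinarith [mul_le_mul_of_nonneg_right (le_abs_self c) ht,
            mul_le_mul_of_nonneg_right (neg_le_abs c) ht,
            mul_le_mul_of_nonneg_left htS (abs_nonneg c)]
        calc A t ≤ A 0 := hA0
          _ = A 0 * 1 := by ring
          _ ≤ A 0 * Real.exp (|c| * S + -c * t) :=
              mul_le_mul_of_nonneg_left (Real.one_le_exp habs) A0pos.le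
          _ = (A 0 * Real.exp (|c| * S)) * Real.exp (-c * t) := by
              rw [Real.exp_add]; ring
          _ ≤ C₁ * Real.exp (-c * t) :=
              mul_le_mul_of_nonneg_right (le_max_right _ _) (Real.exp_pos _).le
    refine ⟨C₁, hC₁1, ?_⟩
    -- eventually exp (ε R) ≥ R
    have hev2 : ∀ᶠ R : ℝ in atTop, R ≤ Real.exp (ε * R) := by
      have h1 : Tendsto (fun R : ℝ => ε * R) atTop atTop :=
        (tendsto_id (α := ℝ)).const_mul_atTop hε
      have h3 := (Real.tendsto_exp_div_pow_atTop 1).comp h1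
      filter_upwards [h3.eventually_ge_atTop (1 / ε), eventually_gt_atTop (0 : ℝ)]
        with R hR hR0
      have hεR : 0 < ε * R := by positivity
      have := (le_div_iff₀ (by simpa using hεR)).mp hR
      calc R = 1 / ε * (ε * R) := by field_simp
        _ ≤ Real.exp (ε * R) := by simpa [Function.comp] using this
    filter_upwards [eventually_ge_atTop (max T₂ 1), hev2, eventually_gt_atTop (0 : ℝ)]
      with R hRT hRexp hR0
    rw [hF R]
    have hbound : ∀ x ∈ Set.uIoc (0 : ℝ) R,
        ‖A x / A ((x + R) / 2)‖ ≤ C₁ * Real.exp ((δ + 2 * ε) * R) := by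
      rw [Set.uIoc_of_le hR0.le]
      rintro x ⟨hx0, hxR⟩
      have hu0 : (0 : ℝ) ≤ (x + R) / 2 := by linarith
      have hAu : 0 < A ((x + R) / 2) := hApos _ hu0
      have hAx : 0 < A x := hApos _ hx0.le
      rw [Real.norm_eq_abs, abs_of_nonneg (by positivity)]
      have h2 : Real.exp (-(2 * δ + ε) * ((x + R) / 2)) ≤ A ((x + R) / 2) := by
        apply hAlow
        have : max T₂ 1 ≤ R := hRT
        linarith
      have h1 := hup x hx0.le
      have h3 : A x / A ((x + R) / 2) ≤
          C₁ * Real.exp (-c * x) / Real.exp (-(2 * δ + ε) * ((x + R) / 2)) :=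
        div_le_div₀ (by positivity) h1 (Real.exp_pos _) h2
      have h4 : C₁ * Real.exp (-c * x) / Real.exp (-(2 * δ + ε) * ((x + R) / 2))
          = C₁ * Real.exp (-c * x - -(2 * δ + ε) * ((x + R) / 2)) := by
        rw [mul_div_assoc, Real.exp_sub]
      have h5 : -c * x - -(2 * δ + ε) * ((x + R) / 2) ≤ (δ + 2 * ε) * R := by
        rw [hc]
        nlinarith [mul_nonneg (by linarith : (0:ℝ) ≤ 2 * δminus - δ) hx0.le,
          mul_nonneg hε.le (by linarith : (0:ℝ) ≤ R - x)]
      calc A x / A ((x + R) / 2)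
          ≤ C₁ * Real.exp (-c * x - -(2 * δ + ε) * ((x + R) / 2)) := by rw [← h4]; exact h3
        _ ≤ C₁ * Real.exp ((δ + 2 * ε) * R) :=
            mul_le_mul_of_nonneg_left (Real.exp_le_exp.mpr h5) hC₁0
    have hnorm := intervalIntegral.norm_integral_le_of_norm_le_const hbound
    rw [Real.norm_eq_abs] at hnorm
    calc |∫ t in (0:ℝ)..R, A t / A ((t + R) / 2)|
        ≤ C₁ * Real.exp ((δ + 2 * ε) * R) * |R - 0| := hnorm
      _ = C₁ * Real.exp ((δ + 2 * ε) * R) * R := by rw [sub_zero, abs_of_pos hR0]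
      _ ≤ C₁ * Real.exp ((δ + 2 * ε) * R) * Real.exp (ε * R) := by
          apply mul_le_mul_of_nonneg_left hRexp (by positivity)
      _ = C₁ * Real.exp ((δ + 3 * ε) * R) := by
          rw [mul_assoc, ← Real.exp_add]; ring_nf
  constructor
  · intro ε hε
    obtain ⟨C, hC1, hCev⟩ := key ε hε
    exact ⟨C, by linarith, hCev.mono fun R hR => le_trans (le_abs_self _) hR⟩
  · -- limsup log (F R) / R ≤ δ
    have main : ∀ ε > (0 : ℝ),
        Filter.limsup (fun R : ℝ => Real.log (F R) / R) atTop ≤ δ + ε := by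
      intro ε hε
      have hε4 : 0 < ε / 4 := by linarith
      obtain ⟨C, hC1, hCev⟩ := key (ε / 4) hε4
      have hC0 : (0 : ℝ) < C := by linarith
      have hlogC : 0 ≤ Real.log C := Real.log_nonneg hC1
      have hev : ∀ᶠ R in atTop, Real.log (F R) / R ≤ δ + ε := by
        filter_upwards [hCev, eventually_ge_atTop (max 1 (Real.log C / (ε / 4)))]
          with R hFR hRge
        have hR1 : (1 : ℝ) ≤ R := le_trans (le_max_left _ _) hRge
        have hR0 : (0 : ℝ) < R := by linarith
        have hRC : Real.log C ≤ ε / 4 * R := by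
          have := le_trans (le_max_right _ _) hRge
          calc Real.log C = Real.log C / (ε / 4) * (ε / 4) := by field_simp
            _ ≤ R * (ε / 4) := mul_le_mul_of_nonneg_right this hε4.le
            _ = ε / 4 * R := by ring
        rw [div_le_iff₀ hR0]
        have hlogline : Real.log (F R) ≤ Real.log C + (δ + 3 * (ε / 4)) * R := by
          rw [← Real.log_abs]
          rcases eq_or_lt_of_le (abs_nonneg (F R)) with h0 | h0
          · rw [← h0, Real.log_zero]
            have : 0 ≤ (δ + 3 * (ε / 4)) * R := by
              apply mul_nonneg (by linarith) (by linarith)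
            linarith
          · have := (Real.log_le_log_iff h0 (by positivity)).mpr hFR
            rwa [Real.log_mul (ne_of_gt hC0) (Real.exp_ne_zero _), Real.log_exp] at this
        nlinarith
      exact real_limsup_le_of_eventually_le (by linarith) hev
    by_contra hcon
    push_neg at hcon
    have := main ((Filter.limsup (fun R : ℝ => Real.log (F R) / R) atTop - δ) / 2)
      (by linarith)
    linarith
end

section
/- Let A : ℝ≥0 → ℝ>0 be nonincreasing with e^{-bs} ≤ A(t+s)/A(t) ≤ e^{-as} for all t,s ≥ 0 (for some 0 < a ≤ b), let δ⁻ = liminf_{R→∞} (1/R) ln(1/A(R/2)), and set F(R) = ∫_0^R A(t)/A((t+R)/2) dt. Then for every ε > 0 there exists c > 0 such that F(R) ≥ c e^{(δ⁻ - ε) R} for all sufficiently large R. -/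
open Filter MeasureTheory

theorem cuspidal_function_lower_bound (a b : ℝ) (ha : 0 < a) (hab : a ≤ b)
    (A : ℝ → ℝ) (hApos : ∀ t, 0 ≤ t → 0 < A t)
    (hAanti : AntitoneOn A (Set.Ici 0))
    (hA : ∀ t ≥ (0 : ℝ), ∀ s ≥ (0 : ℝ),
      Real.exp (-b * s) ≤ A (t + s) / A t ∧ A (t + s) / A t ≤ Real.exp (-a * s))
    (δminus : ℝ)
    (hδm : Filter.liminf (fun R : ℝ => Real.log (1 / A (R / 2)) / R) atTop = δminus)
    (F : ℝ → ℝ) (hF : ∀ R, F R = ∫ t in (0 : ℝ)..R, A t / A ((t + R) / 2)) :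
    ∀ ε > (0 : ℝ), ∃ c > (0 : ℝ), ∀ᶠ R in atTop,
      c * Real.exp ((δminus - ε) * R) ≤ F R := by
  intro ε hε
  have hA1 : (0:ℝ) < A 1 := hApos 1 (by norm_num)
  -- integrability of the integrand on subintervals
  have hInt : ∀ R : ℝ, 0 ≤ R → ∀ u v : ℝ, 0 ≤ u → u ≤ v →
      IntervalIntegrable (fun t => A t / A ((t + R) / 2)) volume u v := by
    intro R hR u v hu huv
    rw [intervalIntegrable_iff_integrableOn_Ioc_of_le huv]
    have hAint : IntegrableOn A (Set.Ioc u v) volume := by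
      have hAnti : AntitoneOn A (Set.uIcc u v) := by
        apply hAanti.mono
        rw [Set.uIcc_of_le huv]
        intro x hx; exact le_trans hu hx.1
      exact (intervalIntegrable_iff_integrableOn_Ioc_of_le huv).1 hAnti.intervalIntegrable
    have hmeas : AEMeasurable (fun t => (A ((t + R) / 2))⁻¹) (volume.restrict (Set.Ioc u v)) := by
      have hmono : MonotoneOn (fun t => (A ((t + R) / 2))⁻¹) (Set.Ioc u v) := by
        intro x hx y hy hxy
        have hx0 : (0:ℝ) ≤ (x + R) / 2 := by linarith [lt_of_le_of_lt hu hx.1]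
        have hy0 : (0:ℝ) ≤ (y + R) / 2 := by linarith [lt_of_le_of_lt hu hy.1]
        exact inv_anti₀ (hApos _ hy0) (hAanti hx0 hy0 (by linarith))
      exact aemeasurable_restrict_of_monotoneOn measurableSet_Ioc hmono
    have hbound : ∀ᵐ x ∂(volume.restrict (Set.Ioc u v)),
        ‖(A ((x + R) / 2))⁻¹‖ ≤ (A ((v + R) / 2))⁻¹ := by
      refine (ae_restrict_iff' measurableSet_Ioc).2 (ae_of_all _ fun x hx => ?_)
      have hx0 : (0:ℝ) ≤ (x + R) / 2 := by linarith [lt_of_le_of_lt hu hx.1]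
      have hv0 : (0:ℝ) ≤ (v + R) / 2 := by linarith
      have h2 : 0 < A ((x + R) / 2) := hApos _ hx0
      rw [Real.norm_eq_abs, abs_of_pos (inv_pos.2 h2)]
      exact inv_anti₀ (hApos _ hv0) (hAanti hx0 hv0 (by linarith [hx.2]))
    have := Integrable.bdd_mul hAint (hmeas.aestronglyMeasurable) hbound
    exact this.congr (ae_of_all _ fun x => by simp [div_eq_mul_inv, mul_comm])
  -- boundedness below of the liminf quantity
  have hbdd : IsBoundedUnder (· ≥ ·) atTop (fun R : ℝ => Real.log (1 / A (R / 2)) / R) := by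
    apply isBoundedUnder_of_eventually_ge (a := min (-Real.log (A 0)) 0)
    filter_upwards [eventually_ge_atTop (1:ℝ)] with R hR
    have hR0 : (0:ℝ) < R := by linarith
    have hR2 : (0:ℝ) ≤ R / 2 := by linarith
    have hpos : 0 < A (R / 2) := hApos _ hR2
    have hle : A (R / 2) ≤ A 0 := hAanti (Set.mem_Ici.2 (le_refl 0)) hR2 hR2
    have hlog : -Real.log (A 0) ≤ Real.log (1 / A (R / 2)) := by
      rw [one_div, Real.log_inv]
      exact neg_le_neg (Real.log_le_log hpos hle)
    rcases le_or_gt 0 (Real.log (1 / A (R / 2))) with h | h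
    · exact le_trans (min_le_right _ _) (div_nonneg h hR0.le)
    · refine le_trans (min_le_left _ _) (le_trans hlog ?_)
      rw [le_div_iff₀ hR0]
      nlinarith [hlog, h]
  have hlt : δminus - ε < Filter.liminf (fun R : ℝ => Real.log (1 / A (R / 2)) / R) atTop := by
    rw [hδm]; linarith
  refine ⟨A 1, hA1, ?_⟩
  filter_upwards [eventually_lt_of_lt_liminf hlt hbdd, eventually_ge_atTop (2:ℝ)] with R hfR hR2
  have hR0 : (0:ℝ) < R := by linarith
  have hR2pos : 0 < A (R / 2) := hApos _ (by linarith)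
  -- exp bound
  have h1 : Real.exp ((δminus - ε) * R) ≤ 1 / A (R / 2) := by
    have := (lt_div_iff₀ hR0).1 hfR
    calc Real.exp ((δminus - ε) * R) ≤ Real.exp (Real.log (1 / A (R / 2))) :=
          Real.exp_le_exp.2 this.le
      _ = 1 / A (R / 2) := Real.exp_log (by positivity)
  -- integral bound
  have hsplit : F R = (∫ t in (0:ℝ)..1, A t / A ((t + R) / 2))
      + ∫ t in (1:ℝ)..R, A t / A ((t + R) / 2) := by
    rw [hF R, ← intervalIntegral.integral_add_adjacent_intervals
      (hInt R hR0.le 0 1 le_rfl (by norm_num)) (hInt R hR0.le 1 R (by norm_num) (by linarith))]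
  have h2 : A 1 / A (R / 2) ≤ ∫ t in (0:ℝ)..1, A t / A ((t + R) / 2) := by
    have hconst : A 1 / A (R / 2) = ∫ _ in (0:ℝ)..1, A 1 / A (R / 2) := by simp
    rw [hconst]
    apply intervalIntegral.integral_mono_on (by norm_num)
      (intervalIntegrable_const) (hInt R hR0.le 0 1 le_rfl (by norm_num))
    intro t ht
    have ht0 := ht.1
    have ht1 := ht.2
    have htR0 : (0:ℝ) ≤ (t + R) / 2 := by linarith
    have hnum : A 1 ≤ A t := hAanti (Set.mem_Ici.2 ht0) (by norm_num) ht1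
    have hden : A ((t + R) / 2) ≤ A (R / 2) := hAanti (by linarith : (0:ℝ) ≤ R/2) htR0 (by linarith)
    exact div_le_div₀ (hApos t ht0).le hnum (hApos _ htR0) hden
  have h3 : (0:ℝ) ≤ ∫ t in (1:ℝ)..R, A t / A ((t + R) / 2) := by
    apply intervalIntegral.integral_nonneg (by linarith)
    intro t ht
    have ht0 : (0:ℝ) ≤ t := by linarith [ht.1]
    exact div_nonneg (hApos t ht0).le (hApos _ (by linarith)).le
  calc A 1 * Real.exp ((δminus - ε) * R) ≤ A 1 * (1 / A (R / 2)) := by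
        exact mul_le_mul_of_nonneg_left h1 hA1.le
    _ = A 1 / A (R / 2) := by ring
    _ ≤ F R := by rw [hsplit]; linarith
end
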